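/- Vectors s₁, …, s_m ∈ ℝⁿ form an n-dimensional eutactic star of scale s (i.e., they are the images of √s·e₁, …, √s·e_m under an orthogonal projection from ℝ^m onto an n-dimensional subspace) if and only if for every w ∈ ℝⁿ, ∑_{i=1}^m ⟨w, s_i⟩² = s·⟨w, w⟩. -/

import Mathlib

open scoped RealInnerProductSpace

/-- Vectors `v 1, …, v m ∈ ℝⁿ` form an `n`-dimensional eutactic star of scale `s`
(images of `√s·e₁, …, √s·e_m` under the orthogonal projection of `ℝ^m` onto an
`n`-dimensional subspace, identified with `ℝⁿ` via a linear isometry `f`) if and only if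
`∑ i, ⟪w, v i⟫² = s⟪w, w⟫` for every `w ∈ ℝⁿ`. -/
theorem stmt_6 (n m : ℕ) (s : ℝ) (hs : 0 < s) (v : Fin m → EuclideanSpace ℝ (Fin n)) :
    (∃ f : EuclideanSpace ℝ (Fin n) →ₗᵢ[ℝ] EuclideanSpace ℝ (Fin m),
      ∀ i, v i = (LinearMap.adjoint f.toLinearMap)
        (Real.sqrt s • EuclideanSpace.single i (1 : ℝ))) ↔
    (∀ w : EuclideanSpace ℝ (Fin n), ∑ i, ⟪w, v i⟫ ^ 2 = s * ⟪w, w⟫) := by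
  have hsq : Real.sqrt s ≠ 0 := by positivity
  constructor
  · rintro ⟨f, hf⟩ w
    have key : ∀ i, ⟪w, v i⟫ = Real.sqrt s * f w i := by
      intro i
      rw [hf i, LinearMap.adjoint_inner_right, inner_smul_right]
      have : ⟪f.toLinearMap w, EuclideanSpace.single i (1 : ℝ)⟫ = f w i := by
        rw [EuclideanSpace.inner_single_right]; simp
      rw [this]
    simp only [key]
    have h1 : ∑ i, (Real.sqrt s * f w i) ^ 2 = s * ∑ i, (f w i) ^ 2 := by
      rw [Finset.mul_sum]
      refine Finset.sum_congr rfl fun i _ => ?_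
      rw [mul_pow, Real.sq_sqrt hs.le]
    rw [h1]
    have h2 : ∑ i, (f w i) ^ 2 = ⟪f w, f w⟫ := by
      rw [real_inner_self_eq_norm_sq, EuclideanSpace.norm_eq,
        Real.sq_sqrt (by positivity)]
      simp [sq]
    rw [h2, f.inner_map_map]
  · intro h
    set c := (Real.sqrt s)⁻¹ with hc
    have hcs : c ^ 2 * s = 1 := by
      rw [hc, ← Real.sqrt_inv]
      rw [Real.sq_sqrt (by positivity)]
      field_simp
    let L : EuclideanSpace ℝ (Fin n) →ₗ[ℝ] EuclideanSpace ℝ (Fin m) :=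
      { toFun := fun w => WithLp.toLp 2 (fun i => c * ⟪v i, w⟫)
        map_add' := fun x y => by
          ext i; simp [inner_add_right]; ring
        map_smul' := fun r x => by
          ext i; simp [inner_smul_right]; ring }
    have hL : ∀ w i, L w i = c * ⟪v i, w⟫ := fun _ _ => rfl
    have hnorm : ∀ w, ‖L w‖ = ‖w‖ := by
      intro w
      rw [EuclideanSpace.norm_eq, norm_eq_sqrt_real_inner w]
      congr 1
      calc ∑ i, ‖L w i‖ ^ 2 = ∑ i, c ^ 2 * ⟪v i, w⟫ ^ 2 := by
            refine Finset.sum_congr rfl fun i _ => ?_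
            rw [hL, Real.norm_eq_abs, sq_abs, mul_pow]
        _ = c ^ 2 * ∑ i, ⟪w, v i⟫ ^ 2 := by
            rw [Finset.mul_sum]
            exact Finset.sum_congr rfl fun i _ => by rw [real_inner_comm]
        _ = ⟪w, w⟫ := by rw [h w, ← mul_assoc, hcs, one_mul]
    refine ⟨⟨L, fun w => hnorm w⟩, fun i => ?_⟩
    refine ext_inner_left ℝ fun w => ?_
    rw [LinearMap.adjoint_inner_right, inner_smul_right]
    have : ⟪(L : EuclideanSpace ℝ (Fin n) →ₗ[ℝ] EuclideanSpace ℝ (Fin m)) w,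
        EuclideanSpace.single i (1 : ℝ)⟫ = c * ⟪v i, w⟫ := by
      rw [EuclideanSpace.inner_single_right]; simp [hL]
    rw [show ((⟨L, fun w => hnorm w⟩ : EuclideanSpace ℝ (Fin n) →ₗᵢ[ℝ]
        EuclideanSpace ℝ (Fin m)).toLinearMap) = L from rfl, this,
      real_inner_comm]
    field_simp [hc]
    rw [hc, mul_assoc, mul_inv_cancel₀ hsq, mul_one]
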